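/- arXiv:2504.20803 — 3 statements merged into one kernel-verified Lean document; each statement's English description precedes it below -/
import Mathlib

section
/- Let E be a real normed space, F̃ : E × ℝ → ℝ a continuously differentiable function, K ⊆ E a compact set, and ε ∈ (0, 1/2). Then there exists C₀ > 0 such that for every C ≥ C₀, the function F : E × ℝ → ℝ defined by F(x,s) = F̃(x,s) + C·h(s) has no critical points in K × [ε, 1-ε]; that is, the Fréchet derivative of F is nonzero at every point (x,s) with x ∈ K and ε ≤ s ≤ 1-ε. -/
open Filter Topology

/-- The interpolation profile `h(s) = s³ - (3/2)s²`. -/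
noncomputable def hfun (s : ℝ) : ℝ := s ^ 3 - (3 / 2) * s ^ 2

lemma hfun_hasDerivAt (s : ℝ) : HasDerivAt hfun (3 * s ^ 2 - 3 * s) s := by
  have h1 := hasDerivAt_pow 3 s
  have h2 := (hasDerivAt_pow 2 s).const_mul (3 / 2 : ℝ)
  have := h1.sub h2
  convert this using 1
  · rfl
  · rfl
  · rfl
  push_cast
  ring

/-- For a `C¹` function `F̃ : E × ℝ → ℝ`, a compact set `K ⊆ E`, and `ε ∈ (0, 1/2)`,
there exists `C₀ > 0` such that for every `C ≥ C₀` the function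
`F(x,s) = F̃(x,s) + C·h(s)` has no critical points in `K × [ε, 1-ε]`. -/
theorem no_critical_points_in_band {E : Type*} [NormedAddCommGroup E] [NormedSpace ℝ E]
    (Ftilde : E × ℝ → ℝ) (hFt : ContDiff ℝ 1 Ftilde)
    (K : Set E) (hK : IsCompact K) (ε : ℝ) (hε : ε ∈ Set.Ioo (0 : ℝ) (1 / 2)) :
    ∃ C₀ > (0 : ℝ), ∀ C : ℝ, C₀ ≤ C → ∀ x ∈ K, ∀ s ∈ Set.Icc ε (1 - ε),
      fderiv ℝ (fun p : E × ℝ => Ftilde p + C * hfun p.2) (x, s) ≠ 0 := by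
  obtain ⟨hε0, hε2⟩ := hε
  have hden : (0 : ℝ) < 3 * ε * (1 - ε) := by nlinarith
  -- bound on the derivative of Ftilde on the compact band
  obtain ⟨M, hM⟩ := (hK.prod (isCompact_Icc (a := ε) (b := 1 - ε))).exists_bound_of_continuousOn
    (f := fun p => fderiv ℝ Ftilde p) (hFt.continuous_fderiv one_ne_zero).continuousOn
  have hM0 : 0 ≤ M ∨ True := Or.inr trivial
  refine ⟨max 1 ((M + 1) / (3 * ε * (1 - ε))), lt_of_lt_of_le one_pos (le_max_left _ _),
    fun C hC x hx s hs => ?_⟩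
  have hsmem : (x, s) ∈ K ×ˢ Set.Icc ε (1 - ε) := ⟨hx, hs⟩
  have hMle : ‖fderiv ℝ Ftilde (x, s)‖ ≤ M := hM _ hsmem
  have hMnn : (0 : ℝ) ≤ M := le_trans (norm_nonneg _) hMle
  -- compute the derivative
  have hF1 : HasFDerivAt Ftilde (fderiv ℝ Ftilde (x, s)) (x, s) :=
    (hFt.differentiable one_ne_zero (x, s)).hasFDerivAt
  have hh : HasFDerivAt (fun p : E × ℝ => hfun p.2)
      (((1 : ℝ →L[ℝ] ℝ).smulRight (3 * s ^ 2 - 3 * s)).comp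
        (ContinuousLinearMap.snd ℝ E ℝ)) (x, s) :=
    HasFDerivAt.comp (g := hfun) (x, s) (hfun_hasDerivAt s).hasFDerivAt (hasFDerivAt_snd (p := (x, s)))
  have hF : HasFDerivAt (fun p : E × ℝ => Ftilde p + C * hfun p.2)
      (fderiv ℝ Ftilde (x, s) +
        C • (((1 : ℝ →L[ℝ] ℝ).smulRight (3 * s ^ 2 - 3 * s)).comp
          (ContinuousLinearMap.snd ℝ E ℝ))) (x, s) := hF1.add (hh.const_mul C)
  rw [hF.fderiv]
  intro hzero
  have hval := congrArg (fun L : E × ℝ →L[ℝ] ℝ => L ((0 : E), (1 : ℝ))) hzero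
  simp at hval
  -- hval : fderiv Ftilde (x,s) (0,1) + C * (3 s² - 3 s) = 0
  have hnorm01 : ‖((0 : E), (1 : ℝ))‖ = 1 := by
    simp [Prod.norm_def]
  have hbd : |(fderiv ℝ Ftilde (x, s)) ((0 : E), (1 : ℝ))| ≤ M := by
    calc |(fderiv ℝ Ftilde (x, s)) ((0 : E), (1 : ℝ))|
        ≤ ‖fderiv ℝ Ftilde (x, s)‖ * ‖((0 : E), (1 : ℝ))‖ :=
          (fderiv ℝ Ftilde (x, s)).le_opNorm _
      _ ≤ M := by rw [hnorm01, mul_one]; exact hMle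
  have hC1 : (M + 1) / (3 * ε * (1 - ε)) ≤ C := le_trans (le_max_right _ _) hC
  have hC2 : M + 1 ≤ C * (3 * ε * (1 - ε)) := by
    rw [div_le_iff₀ hden] at hC1; linarith
  have hsε : ε ≤ s := hs.1
  have hsε2 : s ≤ 1 - ε := hs.2
  have hquad : ε * (1 - ε) ≤ s * (1 - s) := by nlinarith
  have hCpos : 0 < C := lt_of_lt_of_le (lt_of_lt_of_le one_pos (le_max_left _ _)) hC
  have habs := abs_le.mp hbd
  nlinarith [mul_le_mul_of_nonneg_left hquad hCpos.le]
end

section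
/- Let F : E → ℝ be differentiable with continuous gradient map ∇F : E → E, and let γ : ℝ → E be a gradient flow line of F such that the forward image {γ(t) : t ≥ 0} has compact closure. Then there exist a sequence tₙ → +∞ and a point p ∈ E such that γ(tₙ) → p and ∇F(p) = 0; i.e., the forward orbit accumulates at a critical point of F. -/
open Filter Topology

/-- If the forward orbit of a gradient flow line `γ` of a differentiable function `F`
with continuous gradient has compact closure, then there is a sequence `tₙ → +∞` with
`γ(tₙ)` converging to a critical point `p` of `F`. -/
theorem forward_orbit_accumulates_at_critical {E : Type*} [NormedAddCommGroup E]
    [InnerProductSpace ℝ E] [CompleteSpace E]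
    (F : E → ℝ) (hF : Differentiable ℝ F) (hgrad : Continuous (gradient F)) (γ : ℝ → E)
    (hγ : ∀ t : ℝ, HasDerivAt γ (-(gradient F (γ t))) t)
    (hcpt : IsCompact (closure (γ '' Set.Ici (0 : ℝ)))) :
    ∃ (t : ℕ → ℝ) (p : E), Tendsto t atTop atTop ∧
      Tendsto (fun n => γ (t n)) atTop (𝓝 p) ∧ gradient F p = 0 := by
  classical
  set g : ℝ → ℝ := fun t => F (γ t) with hg_def
  -- derivative of F ∘ γ
  have hg : ∀ t, HasDerivAt g (-(‖gradient F (γ t)‖ ^ 2)) t := by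
    intro t
    have h1 : HasFDerivAt F (InnerProductSpace.toDual ℝ E (gradient F (γ t))) (γ t) :=
      (hasGradientAt_iff_hasFDerivAt).1 (hF (γ t)).hasGradientAt
    have h2 := h1.comp_hasDerivAt t (hγ t)
    convert h2 using 1
    all_goals try rfl
    simp only [InnerProductSpace.toDual_apply_apply, inner_neg_right, real_inner_self_eq_norm_sq]
  -- lower bound for g on [0, ∞)
  have hne : (closure (γ '' Set.Ici (0 : ℝ))).Nonempty :=
    ⟨γ 0, subset_closure ⟨0, Set.mem_Ici.2 le_rfl, rfl⟩⟩
  obtain ⟨xmin, _, hxmin⟩ := hcpt.exists_isMinOn hne (hF.continuous.continuousOn)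
  have hlb : ∀ s : ℝ, 0 ≤ s → F xmin ≤ g s := by
    intro s hs
    exact hxmin (subset_closure ⟨s, hs, rfl⟩)
  -- for each n, find t ≥ n with small gradient
  have key : ∀ n : ℕ, ∃ s : ℝ, (n : ℝ) ≤ s ∧ ‖gradient F (γ s)‖ < 1 / (n + 1) := by
    intro n
    by_contra hcon
    push_neg at hcon
    set c : ℝ := 1 / ((n : ℝ) + 1) with hc_def
    have hc : 0 < c := by positivity
    -- h := g + c^2 * t is antitone on [n, ∞)
    have hanti : AntitoneOn (fun s => g s + c ^ 2 * s) (Set.Ici (n : ℝ)) := by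
      apply antitoneOn_of_deriv_nonpos (convex_Ici _)
      · have hgc : Continuous g := continuous_iff_continuousAt.2 fun s => (hg s).continuousAt
        exact (hgc.add (continuous_const.mul continuous_id)).continuousOn
      · intro s _
        exact ((hg s).add ((hasDerivAt_id s).const_mul (c ^ 2))).differentiableAt.differentiableWithinAt
      · intro s hs
        rw [interior_Ici] at hs
        have hd : HasDerivAt (fun s => g s + c ^ 2 * s) (-(‖gradient F (γ s)‖ ^ 2) + c ^ 2 * 1) s :=
          (hg s).add ((hasDerivAt_id s).const_mul (c ^ 2))
        rw [hd.deriv]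
        have := hcon s (le_of_lt hs)
        nlinarith [this, hc.le]
    -- get contradiction: g goes below its lower bound
    set T : ℝ := (n : ℝ) + (g n - F xmin + 1) / c ^ 2 with hT_def
    have hTn : (n : ℝ) ≤ T := by
      have h1 : F xmin ≤ g n := hlb n (Nat.cast_nonneg n)
      have : 0 ≤ (g n - F xmin + 1) / c ^ 2 := by
        apply div_nonneg (by linarith) (by positivity)
      rw [hT_def]
      linarith
    have := hanti (Set.self_mem_Ici) hTn hTn
    have hT0 : (0 : ℝ) ≤ T := le_trans (Nat.cast_nonneg n) hTn
    have hlbT := hlb T hT0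
    have hceq : c ^ 2 * T = c ^ 2 * n + (g n - F xmin + 1) := by
      rw [hT_def, mul_add, mul_div_cancel₀]
      positivity
    simp only at this
    rw [hceq] at this
    linarith
  choose t ht1 ht2 using key
  -- t tends to atTop
  have htop : Tendsto t atTop atTop :=
    tendsto_atTop_mono ht1 tendsto_natCast_atTop_atTop
  -- extract convergent subsequence of γ ∘ t
  have hmem : ∀ n, γ (t n) ∈ closure (γ '' Set.Ici (0 : ℝ)) := by
    intro n
    exact subset_closure ⟨t n, le_trans (Nat.cast_nonneg n) (ht1 n), rfl⟩
  obtain ⟨p, _, ψ, hψ, hconv⟩ := hcpt.tendsto_subseq hmem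
  refine ⟨t ∘ ψ, p, htop.comp hψ.tendsto_atTop, hconv, ?_⟩
  -- gradient tends to gradient F p by continuity, and to 0 by smallness
  have h1 : Tendsto (fun n => gradient F (γ (t (ψ n)))) atTop (𝓝 (gradient F p)) :=
    (hgrad.continuousAt.tendsto).comp hconv
  have h2 : Tendsto (fun n => gradient F (γ (t (ψ n)))) atTop (𝓝 0) := by
    rw [tendsto_zero_iff_norm_tendsto_zero]
    apply squeeze_zero (fun n => norm_nonneg _) (fun n => le_of_lt (ht2 (ψ n)))
    have : Tendsto (fun n : ℕ => 1 / ((n : ℝ) + 1)) atTop (𝓝 0) := tendsto_one_div_add_atTop_nhds_zero_nat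
    apply squeeze_zero (fun n => by positivity) (fun n => ?_) this
    have hψn : (n : ℝ) ≤ (ψ n : ℝ) := Nat.cast_le.2 (hψ.le_apply)
    apply div_le_div_of_nonneg_left one_pos.le (by positivity) (by linarith)
  exact tendsto_nhds_unique h1 h2
end

section
/- Let x* ∈ E be a critical point of f, i.e., ∇f(x*) = 0. Then the curve γ(t) = (x*, 1/(1 + e^{-3Ct})) is a gradient flow line of the split interpolation function F on all of ℝ, and it satisfies γ(t) → (x*, 0) as t → -∞ and γ(t) → (x*, 1) as t → +∞. In particular there exists a gradient flow line of F connecting the critical point (x*, 0) of F to the critical point (x*, 1) of F. -/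
open Filter Topology

/-- The split interpolation function `F(x,s) = f(x) + C·h(s)` on `E × ℝ`, where `E × ℝ`
carries the product (L²) inner product. -/
noncomputable def Fsplit {E : Type*} [NormedAddCommGroup E] [InnerProductSpace ℝ E]
    (f : E → ℝ) (C : ℝ) (p : WithLp 2 (E × ℝ)) : ℝ :=
  f ((WithLp.equiv 2 (E × ℝ)) p).1 + C * hfun ((WithLp.equiv 2 (E × ℝ)) p).2

lemma gradient_Fsplit {E : Type*} [NormedAddCommGroup E] [InnerProductSpace ℝ E]
    [CompleteSpace E] (f : E → ℝ) (hf : Differentiable ℝ f) (C : ℝ)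
    (p : WithLp 2 (E × ℝ)) :
    HasGradientAt (Fsplit f C)
      ((WithLp.equiv 2 (E × ℝ)).symm
        (gradient f p.fst, C * (3 * p.snd ^ 2 - 3 * p.snd))) p := by
  set π : WithLp 2 (E × ℝ) ≃L[ℝ] E × ℝ := WithLp.prodContinuousLinearEquiv 2 ℝ E ℝ
  have hfst : HasFDerivAt (fun q : WithLp 2 (E × ℝ) => q.fst)
      ((ContinuousLinearMap.fst ℝ E ℝ).comp (π : WithLp 2 (E × ℝ) →L[ℝ] E × ℝ)) p :=
    ((ContinuousLinearMap.fst ℝ E ℝ).comp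
      (π : WithLp 2 (E × ℝ) →L[ℝ] E × ℝ)).hasFDerivAt
  have hsnd : HasFDerivAt (fun q : WithLp 2 (E × ℝ) => q.snd)
      ((ContinuousLinearMap.snd ℝ E ℝ).comp (π : WithLp 2 (E × ℝ) →L[ℝ] E × ℝ)) p :=
    ((ContinuousLinearMap.snd ℝ E ℝ).comp
      (π : WithLp 2 (E × ℝ) →L[ℝ] E × ℝ)).hasFDerivAt
  have h1 : HasFDerivAt (fun q : WithLp 2 (E × ℝ) => f q.fst)
      ((fderiv ℝ f p.fst).comp
        ((ContinuousLinearMap.fst ℝ E ℝ).comp (π : WithLp 2 (E × ℝ) →L[ℝ] E × ℝ))) p :=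
    (hf p.fst).hasFDerivAt.comp p hfst
  have h2 : HasFDerivAt (fun q : WithLp 2 (E × ℝ) => hfun q.snd)
      (((3 * p.snd ^ 2 - 3 * p.snd) •
        ((ContinuousLinearMap.snd ℝ E ℝ).comp (π : WithLp 2 (E × ℝ) →L[ℝ] E × ℝ)))) p := by
    have := (hfun_hasDerivAt p.snd).hasFDerivAt.comp p hsnd
    refine this.congr_fderiv ?_
    ext v
    simp [mul_comm]
  have hF : HasFDerivAt (Fsplit f C)
      ((fderiv ℝ f p.fst).comp
        ((ContinuousLinearMap.fst ℝ E ℝ).comp (π : WithLp 2 (E × ℝ) →L[ℝ] E × ℝ)) +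
       C • ((3 * p.snd ^ 2 - 3 * p.snd) •
        ((ContinuousLinearMap.snd ℝ E ℝ).comp (π : WithLp 2 (E × ℝ) →L[ℝ] E × ℝ)))) p :=
    h1.add (h2.const_smul C)
  rw [hasGradientAt_iff_hasFDerivAt]
  have hg : ∀ w : E, fderiv ℝ f p.fst w = inner ℝ (gradient f p.fst) w := by
    intro w
    rw [gradient, ← InnerProductSpace.toDual_apply_apply,
      LinearIsometryEquiv.apply_symm_apply]
  have hEq : InnerProductSpace.toDual ℝ (WithLp 2 (E × ℝ))
      ((WithLp.equiv 2 (E × ℝ)).symm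
        (gradient f p.fst, C * (3 * p.snd ^ 2 - 3 * p.snd))) =
      (fderiv ℝ f p.fst).comp
        ((ContinuousLinearMap.fst ℝ E ℝ).comp (π : WithLp 2 (E × ℝ) →L[ℝ] E × ℝ)) +
       C • ((3 * p.snd ^ 2 - 3 * p.snd) •
        ((ContinuousLinearMap.snd ℝ E ℝ).comp (π : WithLp 2 (E × ℝ) →L[ℝ] E × ℝ))) := by
    ext v
    simp only [InnerProductSpace.toDual_apply_apply, WithLp.prod_inner_apply,
      WithLp.equiv_symm_apply, WithLp.toLp_fst, WithLp.toLp_snd, ContinuousLinearMap.add_apply,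
      ContinuousLinearMap.coe_comp', Function.comp_apply, ContinuousLinearMap.smul_apply,
      ContinuousLinearMap.coe_fst', ContinuousLinearMap.coe_snd', smul_eq_mul,
      WithLp.prodContinuousLinearEquiv_apply, WithLp.equiv_apply, WithLp.ofLp_fst, WithLp.ofLp_snd,
      ContinuousLinearEquiv.coe_coe]
    rw [hg]
    have e1 : (π v).1 = v.fst := rfl
    have e2 : (π v).2 = v.snd := rfl
    rw [e1, e2]
    have : inner ℝ (C * (3 * p.snd ^ 2 - 3 * p.snd)) v.snd =
        (C * (3 * p.snd ^ 2 - 3 * p.snd)) * v.snd := Real.inner_apply _ _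
    rw [this]
    ring
  rw [hEq]
  exact hF

/-- For a critical point `x*` of `f`, the curve `γ(t) = (x*, 1/(1 + e^{-3Ct}))` is a
gradient flow line of the split interpolation function `F` connecting `(x*, 0)` (at
`-∞`) to `(x*, 1)` (at `+∞`); in particular such a connecting flow line exists. -/
theorem flow_line_over_critical_point {E : Type*} [NormedAddCommGroup E]
    [InnerProductSpace ℝ E] [CompleteSpace E]
    (f : E → ℝ) (hf : Differentiable ℝ f) (C : ℝ) (hC : 0 < C)
    (xstar : E) (hx : gradient f xstar = 0)
    (γ : ℝ → WithLp 2 (E × ℝ))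
    (hγdef : ∀ t : ℝ, γ t =
      (WithLp.equiv 2 (E × ℝ)).symm (xstar, 1 / (1 + Real.exp (-(3 * C * t))))) :
    ((∀ t : ℝ, HasDerivAt γ (-(gradient (Fsplit f C) (γ t))) t) ∧
      Tendsto γ atBot (𝓝 ((WithLp.equiv 2 (E × ℝ)).symm (xstar, 0))) ∧
      Tendsto γ atTop (𝓝 ((WithLp.equiv 2 (E × ℝ)).symm (xstar, 1)))) ∧
    (∃ δ : ℝ → WithLp 2 (E × ℝ),
      (∀ t : ℝ, HasDerivAt δ (-(gradient (Fsplit f C) (δ t))) t) ∧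
      Tendsto δ atBot (𝓝 ((WithLp.equiv 2 (E × ℝ)).symm (xstar, 0))) ∧
      Tendsto δ atTop (𝓝 ((WithLp.equiv 2 (E × ℝ)).symm (xstar, 1)))) := by
  set σ : ℝ → ℝ := fun t => 1 / (1 + Real.exp (-(3 * C * t))) with hσ
  have hpos : ∀ t : ℝ, 0 < 1 + Real.exp (-(3 * C * t)) := fun t => by positivity
  -- derivative of σ
  have hσ' : ∀ t : ℝ, HasDerivAt σ (3 * C * σ t * (1 - σ t)) t := by
    intro t
    have hden : HasDerivAt (fun t : ℝ => 1 + Real.exp (-(3 * C * t)))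
        (Real.exp (-(3 * C * t)) * (-(3 * C))) t := by
      have : HasDerivAt (fun t : ℝ => -(3 * C * t)) (-(3 * C)) t := by
        have h := ((hasDerivAt_id t).const_mul (3 * C)).neg
        simp only [mul_one] at h
        exact h
      simpa using (Real.hasDerivAt_exp _).comp t this |>.const_add 1
    have := hden.inv (ne_of_gt (hpos t))
    have h2 : HasDerivAt σ
        (-(Real.exp (-(3 * C * t)) * (-(3 * C))) / (1 + Real.exp (-(3 * C * t))) ^ 2) t := by
      simp only [hσ, one_div]
      exact this
    convert h2 using 1
    have hne := ne_of_gt (hpos t)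
    simp only [hσ]
    field_simp
    ring
  have key : ∀ t : ℝ,
      -(gradient (Fsplit f C) (γ t)) =
      (WithLp.equiv 2 (E × ℝ)).symm ((0 : E), 3 * C * σ t * (1 - σ t)) := by
    intro t
    have hgrad := (gradient_Fsplit f hf C (γ t)).gradient
    have hfst : (γ t).fst = xstar := by rw [hγdef t]; rfl
    have hsnd : (γ t).snd = σ t := by rw [hγdef t]; rfl
    rw [hgrad, hfst, hsnd, hx]
    have hmn : ∀ a : E × ℝ, -((WithLp.equiv 2 (E × ℝ)).symm a) =
        (WithLp.equiv 2 (E × ℝ)).symm (-a) := fun a =>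
      ((WithLp.linearEquiv 2 ℝ (E × ℝ)).symm.map_neg a).symm
    rw [hmn, Prod.neg_mk, neg_zero]
    congr 2
    ring
  have hflow : ∀ t : ℝ, HasDerivAt γ (-(gradient (Fsplit f C) (γ t))) t := by
    intro t
    rw [key t]
    have hcurve : HasDerivAt (fun t : ℝ => ((xstar, σ t) : E × ℝ))
        (((0 : E), 3 * C * σ t * (1 - σ t)) : E × ℝ) t :=
      (hasDerivAt_const t xstar).prodMk (hσ' t)
    have := ((WithLp.prodContinuousLinearEquiv 2 ℝ E ℝ).symm :
        (E × ℝ) →L[ℝ] WithLp 2 (E × ℝ)).hasFDerivAt.comp_hasDerivAt t hcurve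
    have hγfun : γ = ⇑((WithLp.prodContinuousLinearEquiv 2 ℝ E ℝ).symm :
        (E × ℝ) →L[ℝ] WithLp 2 (E × ℝ)) ∘ fun t => ((xstar, σ t) : E × ℝ) := by
      funext u
      rw [hγdef u]
      rfl
    rw [hγfun]
    exact this
  have hcont : Continuous fun s : ℝ => (WithLp.equiv 2 (E × ℝ)).symm ((xstar, s) : E × ℝ) := by
    exact ((WithLp.prodContinuousLinearEquiv 2 ℝ E ℝ).symm.continuous).comp
      (continuous_const.prodMk continuous_id)
  have hγeq : γ = (fun s : ℝ => (WithLp.equiv 2 (E × ℝ)).symm ((xstar, s) : E × ℝ)) ∘ σ := by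
    funext t; rw [hγdef t]; rfl
  have hbot : Tendsto σ atBot (𝓝 0) := by
    have h1 : Tendsto (fun t : ℝ => -(3 * C * t)) atBot atTop := by
      exact tendsto_neg_atBot_atTop.comp
        (Tendsto.const_mul_atBot (show (0:ℝ) < 3 * C by positivity) tendsto_id)
    have h2 : Tendsto (fun t : ℝ => 1 + Real.exp (-(3 * C * t))) atBot atTop :=
      tendsto_atTop_add_const_left _ 1 ((Real.tendsto_exp_atTop).comp h1)
    have h3 := h2.inv_tendsto_atTop
    simp only [hσ, one_div]
    exact h3
  have htop : Tendsto σ atTop (𝓝 1) := by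
    have h1 : Tendsto (fun t : ℝ => -(3 * C * t)) atTop atBot := by
      exact tendsto_neg_atTop_atBot.comp
        (Tendsto.const_mul_atTop (show (0:ℝ) < 3 * C by positivity) tendsto_id)
    have h2 : Tendsto (fun t : ℝ => 1 + Real.exp (-(3 * C * t))) atTop (𝓝 (1 + 0)) :=
      tendsto_const_nhds.add ((Real.tendsto_exp_atBot).comp h1)
    have h3 : Tendsto σ atTop (𝓝 (1 / (1 + 0))) :=
      tendsto_const_nhds.div h2 (by norm_num)
    simpa using h3
  have hγbot : Tendsto γ atBot (𝓝 ((WithLp.equiv 2 (E × ℝ)).symm (xstar, 0))) := by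
    rw [hγeq]
    exact (hcont.tendsto 0).comp hbot
  have hγtop : Tendsto γ atTop (𝓝 ((WithLp.equiv 2 (E × ℝ)).symm (xstar, 1))) := by
    rw [hγeq]
    exact (hcont.tendsto 1).comp htop
  exact ⟨⟨hflow, hγbot, hγtop⟩, ⟨γ, hflow, hγbot, hγtop⟩⟩
end
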